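/- For a random caterpillar with m ≥ 2 spine nodes after n steps, the expected Zagreb index equals n^2/m + (6m-5)n/m + 4m - 6. -/
import Mathlib


open Finset Filter MeasureTheory

/-- Number of leaves attached to spine node `i` given attachment choices `ω`. -/
def leafCount {m n : ℕ} (ω : Fin n → Fin m) (i : Fin m) : ℕ :=
  (Finset.univ.filter (fun j => ω j = i)).card

/-- Degree of spine node `i` in the caterpillar: its leaf count plus 1 for an
end spine node, plus 2 for an interior spine node. -/
def degS {m n : ℕ} (ω : Fin n → Fin m) (i : Fin m) : ℕ :=
  leafCount ω i + (if i.val = 0 ∨ i.val = m - 1 then 1 else 2)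

/-- Zagreb index: sum of squared degrees of all nodes (each of the `n` leaves has degree 1). -/
def zagreb {m n : ℕ} (ω : Fin n → Fin m) : ℕ :=
  (∑ i, (degS ω i) ^ 2) + n

lemma sum_prod_eq (n m : ℕ) (g : Fin n → Fin m → ℝ) :
    ∑ ω : Fin n → Fin m, ∏ j, g j (ω j) = ∏ j, ∑ v, g j v := by
  have := Finset.prod_univ_sum (fun _ : Fin n => (univ : Finset (Fin m))) g
  rw [Fintype.piFinset_univ] at this
  exact this.symm

lemma sum_eval (m n : ℕ) (f : Fin m → ℝ) (j : Fin n) :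
    ∑ ω : Fin n → Fin m, f (ω j) = (m:ℝ)^(n-1) * ∑ v, f v := by
  have h1 : ∀ ω : Fin n → Fin m, f (ω j) = ∏ l, (if l = j then f (ω l) else 1) := by
    intro ω
    rw [Finset.prod_eq_single j (by intro b _ hb; simp [hb]) (by simp)]
    simp
  calc ∑ ω : Fin n → Fin m, f (ω j)
      = ∑ ω : Fin n → Fin m, ∏ l, (if l = j then f (ω l) else 1) := by
        exact Finset.sum_congr rfl (fun ω _ => h1 ω)
    _ = ∏ l : Fin n, ∑ v : Fin m, (if l = j then f v else 1) :=
        sum_prod_eq n m (fun l v => if l = j then f v else 1)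
    _ = ∏ l : Fin n, (if l = j then ∑ v, f v else (m:ℝ)) := by
        apply Finset.prod_congr rfl; intro l _
        split_ifs <;> simp [Finset.sum_const, Finset.card_univ]
    _ = (m:ℝ)^(n-1) * ∑ v, f v := by
        rw [← Finset.mul_prod_erase univ _ (mem_univ j)]
        rw [if_pos rfl]
        rw [Finset.prod_congr rfl (fun l hl => if_neg (Finset.mem_erase.mp hl).1),
          Finset.prod_const, Finset.card_erase_of_mem (mem_univ j), Finset.card_univ,
          Fintype.card_fin, mul_comm]

lemma sum_pair (m n : ℕ) (j k : Fin n) (h : j ≠ k) :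
    ∑ ω : Fin n → Fin m, (if ω j = ω k then (1:ℝ) else 0) = (m:ℝ)^(n-1) := by
  have hn2 : 2 ≤ n := by
    have hj := j.isLt; have hk := k.isLt
    have : j.val ≠ k.val := fun hv => h (Fin.ext hv)
    omega
  set g : Fin m → Fin n → Fin m → ℝ := fun v l u =>
    if l = j then (if u = v then 1 else 0) else if l = k then (if u = v then 1 else 0) else 1
    with hg
  have hpoint : ∀ ω : Fin n → Fin m,
      (if ω j = ω k then (1:ℝ) else 0) = ∑ v : Fin m, ∏ l, g v l (ω l) := by
    intro ω
    have hprod : ∀ v, ∏ l, g v l (ω l)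
        = (if ω j = v then (1:ℝ) else 0) * (if ω k = v then 1 else 0) := by
      intro v
      rw [← Finset.mul_prod_erase univ _ (mem_univ j)]
      have hk' : k ∈ univ.erase j := Finset.mem_erase.mpr ⟨fun hv => h hv.symm, mem_univ k⟩
      rw [← Finset.mul_prod_erase _ _ hk']
      have : ∏ l ∈ (univ.erase j).erase k, g v l (ω l) = 1 := by
        apply Finset.prod_eq_one
        intro l hl
        have h1 := (Finset.mem_erase.mp hl).1
        have h2 := (Finset.mem_erase.mp (Finset.mem_erase.mp hl).2).1
        simp [hg, h1, h2]
      rw [this]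
      simp [hg, (show k ≠ j from fun hv => h hv.symm)]
    rw [Finset.sum_congr rfl (fun v _ => hprod v)]
    by_cases he : ω j = ω k
    · rw [if_pos he]
      rw [Finset.sum_eq_single (ω j)]
      · simp [he]
      · intro b _ hb
        rw [if_neg (fun hv => hb hv.symm), zero_mul]
      · simp
    · rw [if_neg he]
      symm; apply Finset.sum_eq_zero
      intro v _
      by_cases h1 : ω j = v
      · have h2 : ¬ ω k = v := fun hv => he (h1.trans hv.symm)
        simp [h2]
      · simp [h1]
  calc ∑ ω : Fin n → Fin m, (if ω j = ω k then (1:ℝ) else 0)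
      = ∑ ω : Fin n → Fin m, ∑ v : Fin m, ∏ l, g v l (ω l) :=
        Finset.sum_congr rfl (fun ω _ => hpoint ω)
    _ = ∑ v : Fin m, ∑ ω : Fin n → Fin m, ∏ l, g v l (ω l) := Finset.sum_comm
    _ = ∑ v : Fin m, ∏ l : Fin n, ∑ u : Fin m, g v l u := by
        exact Finset.sum_congr rfl (fun v _ => sum_prod_eq n m (g v))
    _ = ∑ v : Fin m, (m:ℝ)^(n-2) := by
        apply Finset.sum_congr rfl; intro v _
        have hsum : ∀ l, ∑ u : Fin m, g v l u
            = if l = j then 1 else if l = k then 1 else (m:ℝ) := by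
          intro l
          simp only [hg]
          split_ifs <;> simp [Finset.sum_ite_eq', Finset.sum_const, Finset.card_univ]
        rw [Finset.prod_congr rfl (fun l _ => hsum l)]
        rw [← Finset.mul_prod_erase univ _ (mem_univ j), if_pos rfl, one_mul]
        have hk' : k ∈ univ.erase j := Finset.mem_erase.mpr ⟨fun hv => h hv.symm, mem_univ k⟩
        rw [← Finset.mul_prod_erase _ _ hk', if_neg (fun hv => h hv.symm), if_pos rfl, one_mul]
        rw [Finset.prod_congr rfl (fun l hl => by
          have h1 := (Finset.mem_erase.mp hl).1
          have h2 := (Finset.mem_erase.mp (Finset.mem_erase.mp hl).2).1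
          rw [if_neg h2, if_neg h1])]
        rw [Finset.prod_const, Finset.card_erase_of_mem hk', Finset.card_erase_of_mem (mem_univ j),
          Finset.card_univ, Fintype.card_fin, Nat.sub_sub]
    _ = (m:ℝ)^(n-1) := by
        rw [Finset.sum_const, Finset.card_univ, Fintype.card_fin, nsmul_eq_mul]
        rw [show n - 1 = (n-2) + 1 by omega, pow_succ]
        ring

/-- The expected Zagreb index of a random caterpillar with `m ≥ 2` spine nodes after
`n` steps equals `n²/m + (6m-5)n/m + 4m - 6`. -/
theorem expected_zagreb (m n : ℕ) (hm : 2 ≤ m) :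
    (∑ ω : Fin n → Fin m, (zagreb ω : ℝ)) / (m : ℝ) ^ n
      = n ^ 2 / m + (6 * m - 5) * n / m + 4 * m - 6 := by
  have hm0 : (m:ℝ) ≠ 0 := by positivity
  set c : Fin m → ℝ := fun i => if i.val = 0 ∨ i.val = m-1 then 1 else 2 with hc
  have hcard : (Finset.univ : Finset (Fin n → Fin m)).card = m ^ n := by
    simp [Finset.card_univ]
  -- leafCount as indicator sum
  have hX : ∀ (ω : Fin n → Fin m) (i : Fin m),
      (leafCount ω i : ℝ) = ∑ j : Fin n, (if ω j = i then (1:ℝ) else 0) := by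
    intro ω i
    rw [leafCount, Finset.card_filter]
    push_cast
    rfl
  -- degree decomposition
  have hdeg : ∀ (ω : Fin n → Fin m) (i : Fin m),
      (degS ω i : ℝ) = (leafCount ω i : ℝ) + c i := by
    intro ω i
    simp only [degS, hc]
    push_cast [apply_ite (Nat.cast : ℕ → ℝ)]
    split_ifs <;> ring
  -- end nodes count
  have hends : (univ.filter (fun i : Fin m => i.val = 0 ∨ i.val = m-1)).card = 2 := by
    have he : (univ.filter (fun i : Fin m => i.val = 0 ∨ i.val = m-1))
        = {(⟨0, by omega⟩ : Fin m), ⟨m-1, by omega⟩} := by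
      ext i
      simp [Fin.ext_iff]
    rw [he, Finset.card_insert_of_notMem (by simp only [Finset.mem_singleton, Fin.ext_iff]; omega),
      Finset.card_singleton]
  have hnotends : (univ.filter (fun i : Fin m => ¬(i.val = 0 ∨ i.val = m-1))).card = m - 2 := by
    have := Finset.card_filter_add_card_filter_not
      (s := (univ : Finset (Fin m))) (p := fun i : Fin m => i.val = 0 ∨ i.val = m-1)
    rw [Finset.card_univ, Fintype.card_fin, hends] at this
    omega
  have hcsum : ∑ i, c i = 2*(m:ℝ) - 2 := by
    rw [hc]
    rw [Finset.sum_ite, Finset.sum_const, Finset.sum_const, hends, hnotends]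
    have : ((m - 2 : ℕ) : ℝ) = (m:ℝ) - 2 := by
      push_cast [Nat.cast_sub hm]; ring
    simp [this]
    ring
  have hcsq : ∑ i, (c i)^2 = 4*(m:ℝ) - 6 := by
    have hpt : ∀ i, (c i)^2 = if i.val = 0 ∨ i.val = m-1 then (1:ℝ) else 4 := by
      intro i
      by_cases h : i.val = 0 ∨ i.val = m-1 <;> simp [hc, h] <;> norm_num
    rw [Finset.sum_congr rfl (fun i _ => hpt i)]
    rw [Finset.sum_ite, Finset.sum_const, Finset.sum_const, hends, hnotends]
    have : ((m - 2 : ℕ) : ℝ) = (m:ℝ) - 2 := by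
      push_cast [Nat.cast_sub hm]; ring
    simp [this]
    ring
  -- first moment
  have hXsum : ∀ i : Fin m, ∑ ω : Fin n → Fin m, (leafCount ω i : ℝ)
      = n * (m:ℝ)^(n-1) := by
    intro i
    calc ∑ ω : Fin n → Fin m, (leafCount ω i : ℝ)
        = ∑ ω : Fin n → Fin m, ∑ j : Fin n, (if ω j = i then (1:ℝ) else 0) :=
          Finset.sum_congr rfl (fun ω _ => hX ω i)
      _ = ∑ j : Fin n, ∑ ω : Fin n → Fin m, (if ω j = i then (1:ℝ) else 0) := Finset.sum_comm
      _ = ∑ j : Fin n, (m:ℝ)^(n-1) * ∑ v : Fin m, (if v = i then (1:ℝ) else 0) :=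
          Finset.sum_congr rfl (fun j _ => sum_eval m n (fun v => if v = i then 1 else 0) j)
      _ = n * (m:ℝ)^(n-1) := by
          simp [Finset.sum_ite_eq', Finset.sum_const, Finset.card_univ, mul_comm]
  -- second moment
  have hXsq : ∑ ω : Fin n → Fin m, ∑ i : Fin m, (leafCount ω i : ℝ)^2
      = n * (m:ℝ)^n + n * ((n-1 : ℕ):ℝ) * (m:ℝ)^(n-1) := by
    have hpt : ∀ ω : Fin n → Fin m, ∑ i : Fin m, (leafCount ω i : ℝ)^2
        = ∑ j : Fin n, ∑ k : Fin n, (if ω j = ω k then (1:ℝ) else 0) := by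
      intro ω
      have hinner : ∀ (j k : Fin n),
          ∑ i : Fin m, (if ω j = i then (1:ℝ) else 0) * (if ω k = i then 1 else 0)
          = (if ω j = ω k then (1:ℝ) else 0) := by
        intro j k
        rw [Finset.sum_eq_single (ω j)]
        · simp [eq_comm]
        · intro b _ hb
          rw [if_neg (fun hv => hb hv.symm), zero_mul]
        · simp
      calc ∑ i : Fin m, (leafCount ω i : ℝ)^2
          = ∑ i : Fin m, (∑ j : Fin n, if ω j = i then (1:ℝ) else 0)
              * (∑ k : Fin n, if ω k = i then (1:ℝ) else 0) := by
            apply Finset.sum_congr rfl; intro i _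
            rw [hX ω i]; ring
        _ = ∑ i : Fin m, ∑ j : Fin n, ∑ k : Fin n,
              (if ω j = i then (1:ℝ) else 0) * (if ω k = i then 1 else 0) := by
            apply Finset.sum_congr rfl; intro i _
            rw [Finset.sum_mul_sum]
        _ = ∑ j : Fin n, ∑ k : Fin n, ∑ i : Fin m,
              (if ω j = i then (1:ℝ) else 0) * (if ω k = i then 1 else 0) := by
            rw [Finset.sum_comm]
            exact Finset.sum_congr rfl (fun j _ => Finset.sum_comm)
        _ = ∑ j : Fin n, ∑ k : Fin n, (if ω j = ω k then (1:ℝ) else 0) := by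
            exact Finset.sum_congr rfl (fun j _ =>
              Finset.sum_congr rfl (fun k _ => hinner j k))
    calc ∑ ω : Fin n → Fin m, ∑ i : Fin m, (leafCount ω i : ℝ)^2
        = ∑ ω : Fin n → Fin m, ∑ j : Fin n, ∑ k : Fin n, (if ω j = ω k then (1:ℝ) else 0) :=
          Finset.sum_congr rfl (fun ω _ => hpt ω)
      _ = ∑ j : Fin n, ∑ k : Fin n, ∑ ω : Fin n → Fin m, (if ω j = ω k then (1:ℝ) else 0) := by
          rw [Finset.sum_comm]
          exact Finset.sum_congr rfl (fun j _ => Finset.sum_comm)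
      _ = ∑ j : Fin n, ((m:ℝ)^n + ((n-1:ℕ):ℝ) * (m:ℝ)^(n-1)) := by
          apply Finset.sum_congr rfl; intro j _
          rw [← Finset.add_sum_erase univ _ (mem_univ j)]
          congr 1
          · simp [hcard]
          · rw [Finset.sum_congr rfl (fun k hk =>
              sum_pair m n j k (fun hv => (Finset.mem_erase.mp hk).1 hv.symm))]
            rw [Finset.sum_const, Finset.card_erase_of_mem (mem_univ j), Finset.card_univ,
              Fintype.card_fin, nsmul_eq_mul]
      _ = n * (m:ℝ)^n + n * ((n-1 : ℕ):ℝ) * (m:ℝ)^(n-1) := by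
          rw [Finset.sum_const, Finset.card_univ, Fintype.card_fin, nsmul_eq_mul]
          ring
  -- total
  have hz : ∀ ω : Fin n → Fin m, (zagreb ω : ℝ)
      = ∑ i : Fin m, ((leafCount ω i : ℝ)^2 + 2 * c i * (leafCount ω i : ℝ) + (c i)^2)
        + n := by
    intro ω
    rw [zagreb]
    push_cast
    congr 1
    apply Finset.sum_congr rfl; intro i _
    rw [hdeg ω i]; ring
  have htot : ∑ ω : Fin n → Fin m, (zagreb ω : ℝ)
      = (n * (m:ℝ)^n + n * ((n-1:ℕ):ℝ) * (m:ℝ)^(n-1))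
        + 2 * ((2*(m:ℝ)-2) * ((n:ℝ) * (m:ℝ)^(n-1)))
        + (4*(m:ℝ)-6) * (m:ℝ)^n + n * (m:ℝ)^n := by
    calc ∑ ω : Fin n → Fin m, (zagreb ω : ℝ)
        = ∑ ω : Fin n → Fin m,
            (∑ i : Fin m, ((leafCount ω i : ℝ)^2 + 2 * c i * (leafCount ω i : ℝ) + (c i)^2)
              + (n:ℝ)) := Finset.sum_congr rfl (fun ω _ => hz ω)
      _ = (∑ ω : Fin n → Fin m, ∑ i : Fin m, (leafCount ω i : ℝ)^2)
          + (∑ ω : Fin n → Fin m, ∑ i : Fin m, 2 * c i * (leafCount ω i : ℝ))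
          + (∑ ω : Fin n → Fin m, ∑ i : Fin m, (c i)^2)
          + (∑ ω : Fin n → Fin m, (n:ℝ)) := by
          simp only [Finset.sum_add_distrib]
      _ = (n * (m:ℝ)^n + n * ((n-1:ℕ):ℝ) * (m:ℝ)^(n-1))
          + 2 * ((2*(m:ℝ)-2) * ((n:ℝ) * (m:ℝ)^(n-1)))
          + (4*(m:ℝ)-6) * (m:ℝ)^n + n * (m:ℝ)^n := by
          rw [hXsq]
          congr 1
          · congr 1
            · congr 1
              rw [Finset.sum_comm]
              calc ∑ i : Fin m, ∑ ω : Fin n → Fin m, 2 * c i * (leafCount ω i : ℝ)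
                  = ∑ i : Fin m, 2 * c i * ((n:ℝ) * (m:ℝ)^(n-1)) := by
                    apply Finset.sum_congr rfl; intro i _
                    rw [← Finset.mul_sum, hXsum i]
                _ = 2 * ((2*(m:ℝ)-2) * ((n:ℝ) * (m:ℝ)^(n-1))) := by
                    rw [← Finset.sum_mul, ← Finset.mul_sum, hcsum]
                    ring
            · rw [Finset.sum_const, hcard, nsmul_eq_mul, hcsq]
              push_cast
              ring
          · rw [Finset.sum_const, hcard, nsmul_eq_mul]
            push_cast
            ring
  -- key identities
  have hkey : (n:ℝ) * (m:ℝ)^(n-1) * (m:ℝ) = (n:ℝ) * (m:ℝ)^n := by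
    cases n with
    | zero => simp
    | succ N =>
      rw [Nat.add_sub_cancel, pow_succ]
      ring
  have hkey2 : (n:ℝ) * ((n-1:ℕ):ℝ) = (n:ℝ)^2 - n := by
    cases n with
    | zero => simp
    | succ N =>
      rw [Nat.add_sub_cancel]
      push_cast
      ring
  have hRHS : (n:ℝ) ^ 2 / m + (6 * m - 5) * n / m + 4 * m - 6
      = ((n:ℝ)^2 + (6*(m:ℝ)-5)*n + (4*(m:ℝ)-6)*m) / m := by
    field_simp
    ring
  rw [htot, hRHS, div_eq_div_iff (pow_ne_zero n hm0) hm0]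
  linear_combination (((n-1:ℕ):ℝ) + 4*(m:ℝ) - 4) * hkey + ((m:ℝ)^n) * hkey2
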